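/- Let ℓ(a,b) = f₁(a) + g(b) − h₁(a)h₂(b) be a composite inner loss where g and h₂ are differentiable on an open interval I ⊆ ℝ with h₂' nonvanishing on I, and suppose the map φ := g'/h₂' is injective on I. Fix A ∈ ℝ^{N×N} and T ∈ 𝒰_K(1_N/N), and set h := T^⊤ 1_N; assume h_k > 0 for all k. Then Θ ∈ I^{K×K} is a critical point of the map Θ ↦ L_ℓ(T,Θ) := ∑_{i,j,k,l} ℓ(A_{ij}, Θ_{kl}) T_{ik} T_{jl} if and only if φ(Θ_{kl}) = (T^⊤ h₁(A) T)_{kl} / (h_k h_l) for all k,l, where h₁(A) denotes the matrix with entries h₁(A_{ij}); equivalently Θ = φ^{-1}( T^⊤ h₁(A) T ⊘ h h^⊤ ) entrywise. -/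

import Mathlib

open Finset

/-- `𝒰_K(1_N/N)`: matrices `T ∈ ℝ^{N×K}` with nonnegative entries whose rows sum to `1/N`. -/
def UK (N K : ℕ) : Set (Matrix (Fin N) (Fin K) ℝ) :=
  {T | (∀ i k, 0 ≤ T i k) ∧ ∀ i, ∑ k, T i k = 1 / (N : ℝ)}

/-- for a composite inner loss `ℓ(a,b) = f₁(a) + g(b) − h₁(a)h₂(b)` with
`h₂'` nonvanishing and `φ = g'/h₂'` injective on an open interval `I`, and `T ∈ 𝒰_K(1_N/N)`
with positive column sums `h`, a matrix `Θ ∈ I^{K×K}` is a critical point of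
`Θ ↦ L_ℓ(T,Θ) = ∑ ℓ(A_{ij},Θ_{kl}) T_{ik}T_{jl}` (all partial derivatives vanish) iff
`φ(Θ_{kl}) = (T^⊤ h₁(A) T)_{kl} / (h_k h_l)` for all `k,l`. -/
theorem stmt11 (N K : ℕ) (hN : 0 < N) (hK : 0 < K)
    (I : Set ℝ) (hIopen : IsOpen I) (hIinterval : I.OrdConnected)
    (f₁ g h₁ h₂ : ℝ → ℝ)
    (hg : ∀ x ∈ I, DifferentiableAt ℝ g x)
    (hh₂ : ∀ x ∈ I, DifferentiableAt ℝ h₂ x)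
    (hh₂' : ∀ x ∈ I, deriv h₂ x ≠ 0)
    (hφinj : Set.InjOn (fun x => deriv g x / deriv h₂ x) I)
    (ℓ : ℝ → ℝ → ℝ) (hℓ : ∀ a b, ℓ a b = f₁ a + g b - h₁ a * h₂ b)
    (A : Matrix (Fin N) (Fin N) ℝ)
    (T : Matrix (Fin N) (Fin K) ℝ) (hT : T ∈ UK N K)
    (h : Fin K → ℝ) (hh : ∀ k, h k = ∑ i, T i k) (hhpos : ∀ k, 0 < h k)
    (Θ : Matrix (Fin K) (Fin K) ℝ) (hΘ : ∀ k l, Θ k l ∈ I) :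
    (∀ k l : Fin K,
      deriv (fun θ : ℝ => ∑ i, ∑ j, ∑ k', ∑ l',
          ℓ (A i j) (if k' = k ∧ l' = l then θ else Θ k' l') * T i k' * T j l')
        (Θ k l) = 0) ↔
    (∀ k l : Fin K,
      deriv g (Θ k l) / deriv h₂ (Θ k l) =
        (∑ i, ∑ j, T i k * h₁ (A i j) * T j l) / (h k * h l)) := by
  apply forall_congr'; intro k
  apply forall_congr'; intro l
  set θ₀ := Θ k l with hθ₀
  have hg' := (hg _ (hΘ k l)).hasDerivAt
  have hh' := (hh₂ _ (hΘ k l)).hasDerivAt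
  have hd : HasDerivAt (fun θ : ℝ => ∑ i, ∑ j, ∑ k', ∑ l',
        ℓ (A i j) (if k' = k ∧ l' = l then θ else Θ k' l') * T i k' * T j l')
      (∑ i, ∑ j, ∑ k', ∑ l',
        (if k' = k ∧ l' = l then
          (deriv g θ₀ - h₁ (A i j) * deriv h₂ θ₀) * T i k' * T j l' else 0)) θ₀ := by
    apply HasDerivAt.fun_sum; intro i _
    apply HasDerivAt.fun_sum; intro j _
    apply HasDerivAt.fun_sum; intro k' _
    apply HasDerivAt.fun_sum; intro l' _
    by_cases hc : k' = k ∧ l' = l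
    · obtain ⟨rfl, rfl⟩ := hc
      simp only [and_self, if_true, hℓ]
      have : HasDerivAt (fun θ : ℝ => (f₁ (A i j) + g θ - h₁ (A i j) * h₂ θ) * T i k' * T j l')
          ((0 + deriv g θ₀ - h₁ (A i j) * deriv h₂ θ₀) * T i k' * T j l') θ₀ :=
        ((((hasDerivAt_const θ₀ (f₁ (A i j))).add hg').sub
          (hh'.const_mul (h₁ (A i j)))).mul_const _).mul_const _
      simpa using this
    · simp only [if_neg hc]
      exact hasDerivAt_const _ _
  have hsum : (∑ i, ∑ j, ∑ k', ∑ l',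
        (if k' = k ∧ l' = l then
          (deriv g θ₀ - h₁ (A i j) * deriv h₂ θ₀) * T i k' * T j l' else 0)) =
      deriv g θ₀ * (h k * h l) -
        deriv h₂ θ₀ * (∑ i, ∑ j, T i k * h₁ (A i j) * T j l) := by
    have e1 : deriv g θ₀ * (h k * h l) = ∑ i, ∑ j, deriv g θ₀ * (T i k * T j l) := by
      rw [hh k, hh l, Finset.sum_mul_sum, Finset.mul_sum]
      exact Finset.sum_congr rfl fun i _ => Finset.mul_sum _ _ _
    have e2 : deriv h₂ θ₀ * (∑ i, ∑ j, T i k * h₁ (A i j) * T j l) =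
        ∑ i, ∑ j, deriv h₂ θ₀ * (T i k * h₁ (A i j) * T j l) := by
      rw [Finset.mul_sum]
      exact Finset.sum_congr rfl fun i _ => Finset.mul_sum _ _ _
    rw [e1, e2, ← Finset.sum_sub_distrib]
    apply Finset.sum_congr rfl; intro i _
    rw [← Finset.sum_sub_distrib]
    apply Finset.sum_congr rfl; intro j _
    simp [ite_and, Finset.sum_ite_eq, Finset.sum_ite_eq']
    ring
  rw [hd.deriv, hsum, sub_eq_zero,
    div_eq_div_iff (hh₂' _ (hΘ k l)) (mul_pos (hhpos k) (hhpos l)).ne']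
  constructor <;> intro hx <;> linarith [hx]
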